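/- arXiv:1509.05444 — 5 statements merged into one kernel-verified Lean document; each statement's English description precedes it below -/
import Mathlib

section
/- Let α > 0 satisfy α + 1/(1+δ)² < 1 and let R ≥ (|b|/α)^{1/2}. Then for every w = (x,y,z) ∈ V⁺, writing H⁻¹(w) = (x₁,y₁,z₁), one has |z₁ − z³/(ab)| < (α + 1/(1+δ)²)·|z|³/|ab|. -/
open Complex Filter Topology

/-- The quadratic automorphism `H(x,y,z) = (xy + az, x² + by, x)` of `ℂ³`. -/
noncomputable def H (a b : ℂ) (w : ℂ × ℂ × ℂ) : ℂ × ℂ × ℂ :=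
  (w.1 * w.2.1 + a * w.2.2, w.1 ^ 2 + b * w.2.1, w.1)

/-- The inverse automorphism
`H⁻¹(x,y,z) = (z, (y − z²)/b, (x − z(y − z²)/b)/a)`. -/
noncomputable def Hinv (a b : ℂ) (w : ℂ × ℂ × ℂ) : ℂ × ℂ × ℂ :=
  (w.2.2, (w.2.1 - w.2.2 ^ 2) / b,
    (w.1 - w.2.2 * ((w.2.1 - w.2.2 ^ 2) / b)) / a)

/-- `V⁺ = {(x,y,z) : |z| > max{R, |x|, (1+δ)|y|^{1/2}}}`. -/
def Vplus (δ R : ℝ) : Set (ℂ × ℂ × ℂ) :=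
  {w | ‖w.2.2‖ >
    max R (max ‖w.1‖ ((1 + δ) * Real.sqrt ‖w.2.1‖))}

/-- for `α > 0` with `α + 1/(1+δ)² < 1` and `R ≥ (|b|/α)^{1/2}`,
for every `w = (x,y,z) ∈ V⁺`, writing `H⁻¹(w) = (x₁,y₁,z₁)`, one has
`|z₁ − z³/(ab)| < (α + 1/(1+δ)²)·|z|³/|ab|`. -/
theorem stmt0 (a b : ℂ) (ha : a ≠ 0) (hb : b ≠ 0) (δ : ℝ) (hδ : 0 < δ)
    (hbδ : ‖b‖ = 1 + δ) (α : ℝ) (hα : 0 < α)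
    (hα1 : α + 1 / (1 + δ) ^ 2 < 1) (R : ℝ)
    (hR : R ≥ Real.sqrt (‖b‖ / α))
    (w : ℂ × ℂ × ℂ) (hw : w ∈ Vplus δ R) :
    ‖(Hinv a b w).2.2 - w.2.2 ^ 3 / (a * b)‖ <
      (α + 1 / (1 + δ) ^ 2) * ‖w.2.2‖ ^ 3 / ‖a * b‖ := by
  obtain ⟨x, y, z⟩ := w
  simp only [Vplus, Set.mem_setOf_eq, gt_iff_lt, max_lt_iff] at hw
  obtain ⟨hzR, hzx, hzy⟩ := hw
  have key : (Hinv a b (x, y, z)).2.2 - z ^ 3 / (a * b) = (x * b - z * y) / (a * b) := by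
    simp only [Hinv]
    field_simp
    ring
  rw [key, norm_div, norm_mul]
  set X := ‖x‖ with hX
  set Y := ‖y‖ with hY
  set Z := ‖z‖ with hZ
  have hX0 : 0 ≤ X := norm_nonneg x
  have hY0 : 0 ≤ Y := norm_nonneg y
  have hδ1 : (0:ℝ) < 1 + δ := by linarith
  have hZ0 : 0 < Z := lt_of_le_of_lt (le_trans (Real.sqrt_nonneg _) hR) hzR
  have hab : 0 < ‖a‖ * ‖b‖ := by
    apply mul_pos <;> simpa [norm_pos_iff]
  rw [div_lt_div_iff₀ hab hab]
  have hnum : ‖x * b - z * y‖ ≤ X * ‖b‖ + Z * Y := by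
    calc ‖x * b - z * y‖ ≤ ‖x * b‖ + ‖z * y‖ :=
          norm_sub_le _ _
      _ = X * ‖b‖ + Z * Y := by rw [norm_mul, norm_mul]
  have hB : ‖b‖ < α * Z ^ 2 := by
    have h1 : Real.sqrt (‖b‖ / α) < Z := lt_of_le_of_lt hR hzR
    have h2 : ‖b‖ / α < Z ^ 2 := by
      have := Real.sq_sqrt (by positivity : (0:ℝ) ≤ ‖b‖ / α)
      nlinarith [Real.sqrt_nonneg (‖b‖ / α)]
    calc ‖b‖ = (‖b‖ / α) * α := by field_simp
      _ < Z ^ 2 * α := by exact mul_lt_mul_of_pos_right h2 hα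
      _ = α * Z ^ 2 := by ring
  have hYbd : Y < Z ^ 2 / (1 + δ) ^ 2 := by
    have h1 : Real.sqrt Y < Z / (1 + δ) := by
      rw [lt_div_iff₀ hδ1]
      calc Real.sqrt Y * (1 + δ) = (1 + δ) * Real.sqrt Y := by ring
        _ < Z := hzy
    have h2 := Real.sq_sqrt hY0
    have h3 : (Real.sqrt Y) ^ 2 < (Z / (1 + δ)) ^ 2 := by
      exact pow_lt_pow_left₀ h1 (Real.sqrt_nonneg Y) two_ne_zero
    rw [h2] at h3
    calc Y < (Z / (1 + δ)) ^ 2 := h3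
      _ = Z ^ 2 / (1 + δ) ^ 2 := by rw [div_pow]
  have hmain : X * ‖b‖ + Z * Y < (α + 1 / (1 + δ) ^ 2) * Z ^ 3 := by
    have h1 : X * ‖b‖ < Z * (α * Z ^ 2) :=
      mul_lt_mul'' hzx hB hX0 (norm_nonneg b)
    have h2 : Z * Y < Z * (Z ^ 2 / (1 + δ) ^ 2) := by
      exact mul_lt_mul_of_pos_left hYbd hZ0
    have : (α + 1 / (1 + δ) ^ 2) * Z ^ 3 = Z * (α * Z ^ 2) + Z * (Z ^ 2 / (1 + δ) ^ 2) := by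
      field_simp
    linarith
  calc ‖x * b - z * y‖ * (‖a‖ * ‖b‖)
      ≤ (X * ‖b‖ + Z * Y) * (‖a‖ * ‖b‖) :=
        mul_le_mul_of_nonneg_right hnum (le_of_lt hab)
    _ < ((α + 1 / (1 + δ) ^ 2) * Z ^ 3) * (‖a‖ * ‖b‖) :=
        mul_lt_mul_of_pos_right hmain hab
    _ = (α + 1 / (1 + δ) ^ 2) * Z ^ 3 * (‖a‖ * ‖b‖) := rfl
end

section
/- There exists R₀ > 1 such that for all R > R₀ and every w ∈ V⁺ there is a constant c = c(w) > 1 with |zₙ| ≥ c^{3ⁿ} for all n ≥ 0, where H⁻ⁿ(w) = (xₙ,yₙ,zₙ). In particular, the backward orbit of every point of V⁺ escapes to infinity at the super-exponential rate (const)^{3ⁿ}. -/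
set_option maxHeartbeats 1000000

open Complex Filter Topology

/-- `U⁻ = ⋃_{n≥0} Hⁿ(V⁺)`. -/
noncomputable def Uminus (a b : ℂ) (δ R : ℝ) : Set (ℂ × ℂ × ℂ) :=
  ⋃ n : ℕ, (H a b)^[n] '' Vplus δ R

/-- `K⁻ = ℂ³ \ U⁻`. -/
noncomputable def Kminus (a b : ℂ) (δ R : ℝ) : Set (ℂ × ℂ × ℂ) :=
  (Uminus a b δ R)ᶜ

/-- Key step: for `R` large, `Hinv` maps `V⁺` into `V⁺` and the last
coordinate grows cubically. -/
lemma key_step (a b : ℂ) (ha : a ≠ 0) (hb : b ≠ 0) (δ R κ : ℝ) (hδ : 0 < δ)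
    (hbδ : ‖b‖ = 1 + δ)
    (hκdef : κ = (1 - ((1 + δ)⁻¹) ^ 2) / (1 + δ))
    (hR1 : 1 ≤ R)
    (hR2 : 2 ≤ κ * R)
    (hR3 : 2 * ‖a‖ ≤ κ * R)
    (hR4 : 3 * (1 + δ) * ‖a‖ ≤ κ * R)
    (w : ℂ × ℂ × ℂ) (hw : w ∈ Vplus δ R) :
    Hinv a b w ∈ Vplus δ R ∧
      κ * ‖w.2.2‖ ^ 3 ≤
        2 * ‖a‖ * ‖(Hinv a b w).2.2‖ := by
  have hA : 0 < ‖a‖ := norm_pos_iff.mpr ha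
  have hδ1 : (1 : ℝ) < 1 + δ := by linarith only [hδ]
  have ht0 : (0 : ℝ) < (1 + δ)⁻¹ := by positivity
  have htmul : ((1 : ℝ) + δ)⁻¹ * (1 + δ) = 1 := inv_mul_cancel₀ (by linarith only [hδ])
  have ht1 : ((1 : ℝ) + δ)⁻¹ < 1 := by linarith only [mul_pos ht0 hδ, htmul]
  have htt : ((1 : ℝ) + δ)⁻¹ ^ 2 < 1 := by
    linarith only [mul_self_lt_mul_self ht0.le ht1]
  have hκ : 0 < κ := by
    rw [hκdef]
    apply div_pos
    · linarith only [htt]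
    · linarith only [hδ]
  have hκδ : κ * (1 + δ) = 1 - ((1 + δ)⁻¹) ^ 2 := by
    rw [hκdef, div_mul_cancel₀]
    intro h; linarith only [h, hδ]
  simp only [Vplus, Set.mem_setOf_eq] at hw
  simp only [Hinv, Vplus, Set.mem_setOf_eq, norm_div, hbδ]
  set X := ‖w.1‖ with hXdef
  set Y := ‖w.2.1‖ with hYdef
  set Z := ‖w.2.2‖ with hZdef
  set E := ‖w.2.1 - w.2.2 ^ 2‖ with hEdef
  set F := ‖w.1 - w.2.2 * ((w.2.1 - w.2.2 ^ 2) / b)‖ with hFdef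
  set A := ‖a‖ with hAdef
  have hX0 : 0 ≤ X := by rw [hXdef]; exact norm_nonneg _
  have hY0 : 0 ≤ Y := by rw [hYdef]; exact norm_nonneg _
  have hZR : R < Z := lt_of_le_of_lt (le_max_left _ _) hw
  have hZX : X < Z := lt_of_le_of_lt ((le_max_left _ _).trans (le_max_right _ _)) hw
  have hZY : (1 + δ) * Real.sqrt Y < Z :=
    lt_of_le_of_lt ((le_max_right _ _).trans (le_max_right _ _)) hw
  have hZ1 : 1 < Z := lt_of_le_of_lt hR1 hZR
  have hZ0 : 0 < Z := by linarith only [hZ1]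
  have hE0 : 0 ≤ E := by rw [hEdef]; exact norm_nonneg _
  have hF0 : 0 ≤ F := by rw [hFdef]; exact norm_nonneg _
  have hZZR : R < Z ^ 2 := by
    linarith only [mul_lt_mul_of_pos_left hZR hZ0,
      mul_le_mul_of_nonneg_right hR1 hZ0.le, hZR]
  have hκZ2 : 2 < κ * Z ^ 2 := by
    linarith only [mul_lt_mul_of_pos_left hZZR hκ, hR2]
  have hκZ2A : 2 * A < κ * Z ^ 2 := by
    linarith only [mul_lt_mul_of_pos_left hZZR hκ, hR3]
  have hκZ3A : 3 * (1 + δ) * A < κ * Z ^ 2 := by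
    linarith only [mul_lt_mul_of_pos_left hZZR hκ, hR4]
  have hYZ : (1 + δ) ^ 2 * Y < Z ^ 2 := by
    have h1 : ((1 + δ) * Real.sqrt Y) ^ 2 < Z ^ 2 :=
      pow_lt_pow_left₀ hZY (by positivity) (by norm_num)
    calc (1 + δ) ^ 2 * Y = ((1 + δ) * Real.sqrt Y) ^ 2 := by
          rw [mul_pow, Real.sq_sqrt hY0]
      _ < Z ^ 2 := h1
  have ht2 : ((1 + δ)⁻¹) ^ 2 * (1 + δ) ^ 2 = 1 := by
    rw [← mul_pow, htmul, one_pow]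
  have hYt : Y ≤ ((1 + δ)⁻¹) ^ 2 * Z ^ 2 := by
    have h1 := mul_le_mul_of_nonneg_left hYZ.le (sq_nonneg ((1 + δ)⁻¹))
    have h2 : ((1 + δ)⁻¹) ^ 2 * ((1 + δ) ^ 2 * Y) = Y := by
      rw [← mul_assoc, ht2, one_mul]
    linarith only [h1, h2]
  have hElb : Z ^ 2 - Y ≤ E := by
    have h := norm_add_le (w.2.2 ^ 2 - w.2.1) w.2.1
    have e1 : w.2.2 ^ 2 - w.2.1 + w.2.1 = w.2.2 ^ 2 := by ring
    rw [e1, norm_pow] at h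
    have e2 : ‖w.2.2 ^ 2 - w.2.1‖ = E := by
      rw [hEdef]; exact norm_sub_rev _ _
    rw [e2, ← hZdef, ← hYdef] at h
    linarith only [h]
  have hEub : E ≤ Y + Z ^ 2 := by
    have h := norm_add_le w.2.1 (-(w.2.2 ^ 2))
    have e1 : w.2.1 + -(w.2.2 ^ 2) = w.2.1 - w.2.2 ^ 2 := by ring
    rw [e1, norm_neg, norm_pow, ← hYdef, ← hZdef, ← hEdef] at h
    linarith only [h]
  have hElb2 : (1 - ((1 + δ)⁻¹) ^ 2) * Z ^ 2 ≤ E := by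
    have h1 : (1 - ((1 + δ)⁻¹) ^ 2) * Z ^ 2
        = Z ^ 2 - ((1 + δ)⁻¹) ^ 2 * Z ^ 2 := by ring
    linarith only [h1, hElb, hYt]
  have hzq : ‖w.2.2 * ((w.2.1 - w.2.2 ^ 2) / b)‖ = Z * (E / (1 + δ)) := by
    rw [norm_mul, norm_div, hbδ, ← hZdef, ← hEdef]
  have hFlb : Z * (E / (1 + δ)) - X ≤ F := by
    have h := norm_add_le (-(w.1 - w.2.2 * ((w.2.1 - w.2.2 ^ 2) / b))) w.1
    have e1 : -(w.1 - w.2.2 * ((w.2.1 - w.2.2 ^ 2) / b)) + w.1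
        = w.2.2 * ((w.2.1 - w.2.2 ^ 2) / b) := by ring
    rw [e1, norm_neg, hzq, ← hFdef, ← hXdef] at h
    linarith only [h]
  have hF2 : Z * (κ * Z ^ 2) - X ≤ F := by
    have h1 : κ * Z ^ 2 ≤ E / (1 + δ) := by
      rw [le_div_iff₀ (by linarith only [hδ] : (0 : ℝ) < 1 + δ)]
      have e : κ * Z ^ 2 * (1 + δ) = (1 - ((1 + δ)⁻¹) ^ 2) * Z ^ 2 := by
        rw [show κ * Z ^ 2 * (1 + δ) = κ * (1 + δ) * Z ^ 2 from by ring, hκδ]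
      linarith only [e, hElb2]
    linarith only [mul_le_mul_of_nonneg_left h1 hZ0.le, hFlb]
  have hp1 : 0 < (κ * Z ^ 2 - 2) * Z :=
    mul_pos (by linarith only [hκZ2]) hZ0
  have hp2 : 0 < (κ * Z ^ 2 - 2 * A) * Z :=
    mul_pos (by linarith only [hκZ2A]) hZ0
  have hp3 : 0 < (κ * Z ^ 2 - 3 * (1 + δ) * A) * Z :=
    mul_pos (by linarith only [hκZ3A]) hZ0
  have hκZ3 : κ * Z ^ 3 ≤ 2 * F := by
    linarith only [hF2, hZX, hp1]
  constructor
  · refine max_lt ?_ (max_lt ?_ ?_)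
    · rw [lt_div_iff₀ hA]
      linarith only [hF2, hZX, hp1, hp2, mul_pos hA (sub_pos.mpr hZR)]
    · rw [lt_div_iff₀ hA]
      linarith only [hF2, hZX, hp1, hp2]
    · rw [lt_div_iff₀ hA]
      have hYZ2 : Y ≤ Z ^ 2 := by
        linarith only [mul_le_mul_of_nonneg_right htt.le (sq_nonneg Z), hYt]
      have hEd2 : E / (1 + δ) ≤ 2 * Z ^ 2 := by
        rw [div_le_iff₀ (by linarith only [hδ] : (0 : ℝ) < 1 + δ)]
        linarith only [mul_nonneg hδ.le (sq_nonneg Z), hEub, hYZ2]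
      have hsq : Real.sqrt (E / (1 + δ)) ≤ 1.5 * Z := by
        have h1 : Real.sqrt (E / (1 + δ)) ≤ Real.sqrt ((1.5 * Z) ^ 2) :=
          Real.sqrt_le_sqrt (by linarith only [hEd2, sq_nonneg Z])
        rwa [Real.sqrt_sq (by linarith only [hZ0] : (0 : ℝ) ≤ 1.5 * Z)] at h1
      have hmul := mul_le_mul_of_nonneg_right hsq
        (mul_nonneg (by linarith only [hδ] : (0 : ℝ) ≤ 1 + δ) hA.le)
      linarith only [hF2, hZX, hp1, hp3, hmul]
  · have hAne : A ≠ 0 := ne_of_gt hA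
    have h5 : 2 * A * (F / A) = 2 * F := by field_simp
    rw [h5]
    exact hκZ3

/-- there exists `R₀ > 1` such that for all `R > R₀` and every
`w ∈ V⁺` there is a constant `c = c(w) > 1` with `|zₙ| ≥ c^{3ⁿ}` for all
`n ≥ 0`, where `H⁻ⁿ(w) = (xₙ,yₙ,zₙ)`. -/
theorem stmt2 (a b : ℂ) (ha : a ≠ 0) (hb : b ≠ 0) (δ : ℝ) (hδ : 0 < δ)
    (hbδ : ‖b‖ = 1 + δ) :
    ∃ R₀ > (1 : ℝ), ∀ R > R₀, ∀ w ∈ Vplus δ R, ∃ c > (1 : ℝ),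
      ∀ n : ℕ, c ^ (3 ^ n) ≤ ‖((Hinv a b)^[n] w).2.2‖ := by
  have hA : 0 < ‖a‖ := norm_pos_iff.mpr ha
  have hδ1 : (1 : ℝ) < 1 + δ := by linarith only [hδ]
  have ht0 : (0 : ℝ) < (1 + δ)⁻¹ := by positivity
  have htmul : ((1 : ℝ) + δ)⁻¹ * (1 + δ) = 1 := inv_mul_cancel₀ (by linarith only [hδ])
  have ht1 : ((1 : ℝ) + δ)⁻¹ < 1 := by linarith only [mul_pos ht0 hδ, htmul]
  have htt : ((1 : ℝ) + δ)⁻¹ ^ 2 < 1 := by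
    linarith only [mul_self_lt_mul_self ht0.le ht1]
  set κ := (1 - ((1 + δ)⁻¹) ^ 2) / (1 + δ) with hκdef
  have hκ : 0 < κ := by
    rw [hκdef]
    apply div_pos
    · linarith only [htt]
    · linarith only [hδ]
  set A := ‖a‖ with hAdef
  set K := min (κ / (2 * A)) 1 with hKdef
  have hK0 : 0 < K := lt_min (by positivity) one_pos
  have hK1 : K ≤ 1 := min_le_right _ _
  have hKinv : 0 < K⁻¹ := inv_pos.mpr hK0
  have h1δA : 0 < (1 + δ) * A := mul_pos (by linarith only [hδ]) hA
  have hT0 : 0 ≤ (2 + 2 * A + 3 * (1 + δ) * A) / κ :=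
    div_nonneg (by linarith only [hA, h1δA]) hκ.le
  refine ⟨(2 + 2 * A + 3 * (1 + δ) * A) / κ + K⁻¹ + 2,
    by linarith only [hT0, hKinv], ?_⟩
  intro R hR w hw
  have hR1 : 1 ≤ R := by linarith only [hR, hT0, hKinv]
  have hTS : κ * ((2 + 2 * A + 3 * (1 + δ) * A) / κ)
      = 2 + 2 * A + 3 * (1 + δ) * A := by
    field_simp
  have hsum : 2 + 2 * A + 3 * (1 + δ) * A < κ * R := by
    have h := mul_lt_mul_of_pos_left hR hκ
    have h2 : κ * ((2 + 2 * A + 3 * (1 + δ) * A) / κ + K⁻¹ + 2)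
        = κ * ((2 + 2 * A + 3 * (1 + δ) * A) / κ) + κ * K⁻¹ + κ * 2 := by ring
    rw [h2, hTS] at h
    linarith only [h, mul_pos hκ hKinv, hκ]
  have hR2 : 2 ≤ κ * R := by linarith only [hsum, hA, h1δA]
  have hR3 : 2 * A ≤ κ * R := by linarith only [hsum, hA, h1δA]
  have hR4 : 3 * (1 + δ) * A ≤ κ * R := by linarith only [hsum, hA, h1δA]
  have hZ0R : R < ‖w.2.2‖ := by
    have h := hw
    simp only [Vplus, Set.mem_setOf_eq] at h
    exact lt_of_le_of_lt (le_max_left _ _) h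
  have hKinvR : K⁻¹ < ‖w.2.2‖ := by
    linarith only [hZ0R, hR, hT0]
  set c := Real.sqrt K * ‖w.2.2‖ with hcdef
  have hsK0 : 0 < Real.sqrt K := Real.sqrt_pos.mpr hK0
  have hsK1 : Real.sqrt K ≤ 1 := by
    linarith only [Real.sq_sqrt hK0.le, sq_nonneg (Real.sqrt K - 1), hK1]
  have hKsK : K ≤ Real.sqrt K := by
    linarith only [Real.sq_sqrt hK0.le,
      mul_nonneg (Real.sqrt_nonneg K) (by linarith only [hsK1] : (0 : ℝ) ≤ 1 - Real.sqrt K)]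
  have hc1 : 1 < c := by
    rw [hcdef]
    have h1 : K * K⁻¹ = 1 := mul_inv_cancel₀ hK0.ne'
    linarith only [mul_lt_mul_of_pos_left hKinvR hsK0,
      mul_le_mul_of_nonneg_right hKsK hKinv.le, h1]
  refine ⟨c, hc1, ?_⟩
  have main : ∀ n : ℕ, (Hinv a b)^[n] w ∈ Vplus δ R ∧
      c ^ 3 ^ n ≤ Real.sqrt K * ‖((Hinv a b)^[n] w).2.2‖ := by
    intro n
    induction n with
    | zero =>
      refine ⟨by simpa using hw, ?_⟩
      simp only [Function.iterate_zero, id_eq, pow_zero, pow_one]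
      rw [hcdef]
    | succ n ih =>
      obtain ⟨hmem, hz⟩ := ih
      have hks := key_step a b ha hb δ R κ hδ hbδ hκdef hR1 hR2 hR3 hR4 _ hmem
      rw [Function.iterate_succ_apply']
      refine ⟨hks.1, ?_⟩
      set Zn := ‖((Hinv a b)^[n] w).2.2‖ with hZn
      set Z1 := ‖(Hinv a b ((Hinv a b)^[n] w)).2.2‖ with hZ1
      have hZn0 : 0 ≤ Zn := by rw [hZn]; exact norm_nonneg _
      have hstep : K * Zn ^ 3 ≤ Z1 := by
        have hKle : K ≤ κ / (2 * A) := min_le_left _ _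
        have h2 := hks.2
        have h3 : K * Zn ^ 3 ≤ κ / (2 * A) * Zn ^ 3 :=
          mul_le_mul_of_nonneg_right hKle (by positivity)
        have h4 : κ / (2 * A) * Zn ^ 3 ≤ Z1 := by
          rw [div_mul_eq_mul_div, div_le_iff₀ (by positivity : (0 : ℝ) < 2 * A)]
          linarith only [h2]
        linarith only [h3, h4]
      calc c ^ 3 ^ (n + 1) = (c ^ 3 ^ n) ^ 3 := by rw [pow_succ, pow_mul]
        _ ≤ (Real.sqrt K * Zn) ^ 3 :=
            pow_le_pow_left₀ (pow_nonneg (by linarith only [hc1]) _) hz 3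
        _ = Real.sqrt K * (K * Zn ^ 3) := by
            rw [mul_pow,
              show (Real.sqrt K) ^ 3 = K * Real.sqrt K by
                rw [pow_succ, Real.sq_sqrt hK0.le]]
            ring
        _ ≤ Real.sqrt K * Z1 := mul_le_mul_of_nonneg_left hstep (Real.sqrt_nonneg K)
  intro n
  obtain ⟨-, h⟩ := main n
  have h0 : 0 ≤ ‖((Hinv a b)^[n] w).2.2‖ := norm_nonneg _
  linarith only [h,
    mul_nonneg (by linarith only [hsK1] : (0 : ℝ) ≤ 1 - Real.sqrt K) h0]
end

section
/- There exist ε > 0 and R₀ > 1/ε¹⁰ such that for all R > R₀: H(V⁻) ⊂ V⁻, and for every w = (x,y,z) ∈ V⁻, writing H(w) = (x₁,y₁,z₁), one has |xy|/2 < |x₁| < 3|xy|/2 and (1 − |b|ε²)|x|² < |y₁| < (1 + |b|ε²)|x|². -/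
set_option maxHeartbeats 1000000


open Complex Filter Topology

/-- `V⁻ = {(x,y,z) : |xy| > max{R, 2|az|, |x|^{3/2}, (1/ε)|y|^{3/2}}}`. -/
noncomputable def Vminus (a : ℂ) (ε R : ℝ) : Set (ℂ × ℂ × ℂ) :=
  {w | ‖w.1 * w.2.1‖ >
    max R (max (2 * ‖a * w.2.2‖)
      (max ((‖w.1‖) ^ ((3 : ℝ) / 2))
        ((1 / ε) * (‖w.2.1‖) ^ ((3 : ℝ) / 2))))}

/-- `U⁺ = ⋃_{n≥0} H⁻ⁿ(V⁻)`, i.e. the points whose forward orbit meets `V⁻`. -/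
noncomputable def Uplus (a b : ℂ) (ε R : ℝ) : Set (ℂ × ℂ × ℂ) :=
  ⋃ n : ℕ, (H a b)^[n] ⁻¹' Vminus a ε R

/-- `K⁺ = ℂ³ \ U⁺`. -/
noncomputable def Kplus (a b : ℂ) (ε R : ℝ) : Set (ℂ × ℂ × ℂ) :=
  (Uplus a b ε R)ᶜ

/-- `Mₙ = max{R, 2|azₙ|, |xₙ|^{3/2}, (1/ε)|yₙ|^{3/2}}` where `Hⁿ(w) = (xₙ,yₙ,zₙ)`. -/
noncomputable def Mseq (a b : ℂ) (ε R : ℝ) (w : ℂ × ℂ × ℂ) (n : ℕ) : ℝ :=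
  max R (max (2 * ‖a * ((H a b)^[n] w).2.2‖)
    (max ((‖((H a b)^[n] w).1‖) ^ ((3 : ℝ) / 2))
      ((1 / ε) * (‖((H a b)^[n] w).2.1‖) ^ ((3 : ℝ) / 2))))

set_option maxHeartbeats 1000000 in
lemma rpow_th_sq {t : ℝ} (ht : 0 ≤ t) : (t ^ ((3:ℝ)/2)) ^ 2 = t ^ 3 := by
  rw [← Real.rpow_natCast (t ^ ((3:ℝ)/2)) 2, ← Real.rpow_mul ht, ← Real.rpow_natCast t 3]
  norm_num

lemma core (a b : ℂ) (ε R : ℝ) (hε0 : 0 < ε) (hε12 : ε ≤ 1/12)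
    (hb : b ≠ 0) (hbε : ‖b‖ * ε^2 ≤ 1/2)
    (hRε : (1/ε)^10 < R) (hRa : 8 * ‖a‖ < R)
    (w : ℂ × ℂ × ℂ) (hw : w ∈ Vminus a ε R) :
    H a b w ∈ Vminus a ε R ∧
    ‖w.1 * w.2.1‖ / 2 < ‖(H a b w).1‖ ∧
    ‖(H a b w).1‖ < 3 * ‖w.1 * w.2.1‖ / 2 ∧
    (1 - ‖b‖ * ε ^ 2) * (‖w.1‖) ^ 2 < ‖(H a b w).2.1‖ ∧
    ‖(H a b w).2.1‖ < (1 + ‖b‖ * ε ^ 2) * (‖w.1‖) ^ 2 := by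
  obtain ⟨x, y, z⟩ := w
  simp only [Vminus, Set.mem_setOf_eq, gt_iff_lt, max_lt_iff] at hw
  obtain ⟨h1, h2, h3, h4⟩ := hw
  set X := ‖x‖ with hXdef
  set Y := ‖y‖ with hYdef
  have hB0 : 0 < ‖b‖ := norm_pos_iff.mpr hb
  set B := ‖b‖ with hBdef
  set A := ‖a‖ with hAdef
  have hinv : 12 ≤ 1/ε := by rw [le_div_iff₀ hε0]; linarith
  have hR0 : 0 < R := lt_trans (by positivity) hRε
  have hP : ‖x * y‖ = X * Y := norm_mul _ _
  rw [hP] at h1 h2 h3 h4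
  have hxy0 : 0 < X * Y := lt_trans hR0 h1
  have hX0 : 0 < X :=
    lt_of_le_of_ne (norm_nonneg x) (fun h => by simp [← h] at hxy0)
  have hY0 : 0 < Y :=
    lt_of_le_of_ne (norm_nonneg y) (fun h => by simp [← h] at hxy0)
  -- squared versions of h3, h4
  have h3sq : X ^ 3 < (X * Y) ^ 2 := by
    have := pow_lt_pow_left₀ h3 (Real.rpow_nonneg (norm_nonneg x) _) (n := 2) two_ne_zero
    rwa [rpow_th_sq (norm_nonneg x)] at this
  have h4sq : (1/ε)^2 * Y ^ 3 < (X * Y) ^ 2 := by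
    have := pow_lt_pow_left₀ h4 (by positivity) (n := 2) two_ne_zero
    rwa [mul_pow, rpow_th_sq (norm_nonneg y)] at this
  -- Y < ε² X²
  have hYX : Y < ε^2 * X^2 := by
    have hY3 : Y^3 < ε^2 * (X^2 * Y^2) := by
      have h7 := mul_lt_mul_of_pos_right h4sq (pow_pos hε0 2)
      calc Y^3 = (1/ε)^2 * Y^3 * ε^2 := by field_simp
        _ < (X*Y)^2 * ε^2 := h7
        _ = ε^2 * (X^2*Y^2) := by ring
    have h8 : Y * Y^2 < (ε^2*X^2) * Y^2 := by
      calc Y * Y^2 = Y^3 := by ring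
        _ < ε^2 * (X^2*Y^2) := hY3
        _ = (ε^2*X^2) * Y^2 := by ring
    exact lt_of_mul_lt_mul_right h8 (sq_nonneg Y)
  -- X < Y²
  have hXY2 : X < Y^2 := by
    have h8 : X * X^2 < Y^2 * X^2 := by
      calc X * X^2 = X^3 := by ring
        _ < (X*Y)^2 := h3sq
        _ = Y^2 * X^2 := by ring
    exact lt_of_mul_lt_mul_right h8 (sq_nonneg X)
  -- X*Y < ε² X³
  have hPX : X * Y < ε^2 * X^3 := by
    calc X * Y < X * (ε^2 * X^2) := mul_lt_mul_of_pos_left hYX hX0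
      _ = ε^2 * X^3 := by ring
  -- (1/ε)^4 < X
  have hX4 : (1/ε)^4 < X := by
    have h5 : (1/ε)^10 < ε^2 * X^3 := lt_trans hRε (lt_trans h1 hPX)
    have h6 : ((1/ε)^4)^3 < X^3 := by
      have he : ((1/ε)^4)^3 * ε^2 = (1/ε)^10 := by field_simp
      have h7 : ((1/ε)^4)^3 * ε^2 < X^3 * ε^2 := by rw [he, mul_comm]; exact h5
      exact lt_of_mul_lt_mul_right h7 (le_of_lt (pow_pos hε0 2))
    exact lt_of_pow_lt_pow_left₀ 3 (le_of_lt hX0) h6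
  have hX2 : 2 < X := by
    have h124 := pow_le_pow_left₀ (by norm_num : (0:ℝ) ≤ 12) hinv 4
    have e1 : (1/ε)^4 = (ε^4)⁻¹ := by rw [one_div, inv_pow]
    rw [e1] at hX4
    norm_num at h124
    linarith
  have hXe : 6 < ε^2 * X := by
    have he2 : ε^2 * (1/ε)^4 = (1/ε)^2 := by field_simp
    have h122 := pow_le_pow_left₀ (by norm_num : (0:ℝ) ≤ 12) hinv 2
    have e2 : (1/ε)^2 = (ε^2)⁻¹ := by rw [one_div, inv_pow]
    rw [e2] at he2 h122
    norm_num at h122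
    have h5 := mul_lt_mul_of_pos_left hX4 (pow_pos hε0 2)
    linarith
  -- triangle inequality bounds for x₁ = x*y + a*z
  have hu_lo : X * Y - ‖a*z‖ ≤ ‖x*y + a*z‖ := by
    have := norm_add_le (x*y + a*z) (-(a*z))
    simp only [add_neg_cancel_right, norm_neg] at this
    rw [hP] at this; linarith
  have hu_hi : ‖x*y + a*z‖ ≤ X * Y + ‖a*z‖ := by
    have := norm_add_le (x*y) (a*z)
    rw [hP] at this; linarith
  set u := ‖x*y + a*z‖ with hudef
  have hu1 : X * Y / 2 < u := by linarith
  have hu2 : u < 3 * (X * Y) / 2 := by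
    have h0az : 0 ≤ ‖a*z‖ := norm_nonneg _
    linarith
  have hu0 : 0 < u := by linarith
  -- bounds for y₁ = x² + b*y
  have hby : ‖b * y‖ = B * Y := norm_mul _ _
  have hx2 : ‖x^2‖ = X^2 := norm_pow _ _
  have hv_lo : X^2 - B*Y ≤ ‖x^2 + b*y‖ := by
    have := norm_add_le (x^2 + b*y) (-(b*y))
    simp only [add_neg_cancel_right, norm_neg] at this
    rw [hby, hx2] at this; linarith
  have hv_hi : ‖x^2 + b*y‖ ≤ X^2 + B*Y := by
    have := norm_add_le (x^2) (b*y)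
    rw [hby, hx2] at this; linarith
  set v := ‖x^2 + b*y‖ with hvdef
  have hBY : B * Y < B * (ε^2 * X^2) := mul_lt_mul_of_pos_left hYX hB0
  have hv1 : (1 - B * ε^2) * X^2 < v := by
    have e : (1 - B * ε^2) * X^2 = X^2 - B * (ε^2 * X^2) := by ring
    linarith
  have hv2 : v < (1 + B * ε^2) * X^2 := by
    have e : (1 + B * ε^2) * X^2 = X^2 + B * (ε^2 * X^2) := by ring
    linarith
  have hbX : (B * ε^2) * X^2 ≤ 1/2 * X^2 :=
    mul_le_mul_of_nonneg_right hbε (sq_nonneg X)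
  have hv3 : X^2/2 < v := by
    have e : B * (ε^2 * X^2) = (B * ε^2) * X^2 := by ring
    linarith
  have hv4 : v < 3/2 * X^2 := by
    have e : B * (ε^2 * X^2) = (B * ε^2) * X^2 := by ring
    linarith
  have hv0 : 0 < v := lt_trans (div_pos (pow_pos hX0 2) two_pos) hv3
  have huv : (X*Y/2) * (X^2/2) < u * v :=
    mul_lt_mul'' hu1 hv3 (le_of_lt (div_pos hxy0 two_pos)) (le_of_lt (div_pos (pow_pos hX0 2) two_pos))
  have hX24 : 4 < X^2 := by
    have := pow_lt_pow_left₀ hX2 (by norm_num) (n := 2) two_ne_zero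
    norm_num at this; linarith
  refine ⟨?_, ?_, ?_, ?_, ?_⟩
  · -- membership
    show ‖(x*y + a*z) * (x^2 + b*y)‖ > _
    rw [norm_mul]
    simp only [gt_iff_lt, H]
    simp only [← hXdef, ← hYdef, ← hAdef, ← hBdef, ← hudef, ← hvdef]
    refine max_lt ?_ (max_lt ?_ (max_lt ?_ ?_))
    · -- R < u * v
      have h9 : X*Y < X*Y * (X^2/4) :=
        lt_mul_of_one_lt_right hxy0 (by linarith)
      have e : X*Y * (X^2/4) = (X*Y/2) * (X^2/2) := by ring
      linarith
    · -- 2 * |a * x| < u * v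
      rw [norm_mul, ← hAdef, ← hXdef]
      have hA0 : 0 ≤ A := norm_nonneg a
      have h8A : 8 * A < X * Y := lt_trans hRa h1
      have q1 : 2 * (A * X) < (X*Y) * X / 4 := by
        have p := mul_pos (sub_pos.mpr h8A) hX0
        have e' : (X*Y - 8*A) * X = X*Y*X - 8*(A*X) := by ring
        have e'' : (X*Y) * X / 4 = X*Y*X/4 := by ring
        linarith
      have qx : X < X^2 := by
        have p := mul_lt_mul_of_pos_right hX2 hX0
        have e' : X * X = X^2 := by ring
        linarith
      have q2 : (X*Y) * X < (X*Y) * X^2 := mul_lt_mul_of_pos_left qx hxy0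
      have e : (X*Y) * X^2 / 4 = (X*Y/2) * (X^2/2) := by ring
      linarith
    · -- u^(3/2) < u * v
      apply lt_of_pow_lt_pow_left₀ 2 (le_of_lt (mul_pos hu0 hv0))
      rw [rpow_th_sq (norm_nonneg _)]
      have h6e : 6 * ε^2 < X := by
        have p := mul_nonneg (by linarith : (0:ℝ) ≤ 1/12 - ε) (le_of_lt hε0)
        have e' : (1/12 - ε) * ε = ε/12 - ε^2 := by ring
        linarith
      have hu3 : u < 3/2 * (ε^2 * X^3) := by linarith
      have huvv : u < v^2 := by
        have e3 : 3/2 * (ε^2 * X^3) < X^2/2 * (X^2/2) := by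
          have p := mul_pos (sub_pos.mpr h6e) (pow_pos hX0 3)
          have e' : (X - 6*ε^2) * X^3 = X^4 - 6*(ε^2*X^3) := by ring
          have e'' : X^2/2 * (X^2/2) = X^4/4 := by ring
          linarith
        have e4 : X^2/2 * (X^2/2) < v * v := mul_lt_mul'' hv3 hv3 (le_of_lt (div_pos (pow_pos hX0 2) two_pos)) (le_of_lt (div_pos (pow_pos hX0 2) two_pos))
        have e5 : v * v = v^2 := by ring
        linarith
      calc u ^ 3 = u^2 * u := by ring
        _ < u^2 * v^2 := by exact mul_lt_mul_of_pos_left huvv (pow_pos hu0 2)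
        _ = (u * v)^2 := by ring
    · -- (1/ε) * v^(3/2) < u * v
      apply lt_of_pow_lt_pow_left₀ 2 (le_of_lt (mul_pos hu0 hv0))
      rw [mul_pow, rpow_th_sq (norm_nonneg _)]
      have hu2sq : (X*Y/2) * (X*Y/2) < u * u :=
        mul_lt_mul'' hu1 hu1 (le_of_lt (div_pos hxy0 two_pos)) (le_of_lt (div_pos hxy0 two_pos))
      have e1 : ε^2 * ((X*Y)^2/4) < ε^2 * u^2 := by
        apply mul_lt_mul_of_pos_left _ (pow_pos hε0 2)
        have e' : (X*Y/2) * (X*Y/2) = (X*Y)^2/4 := by ring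
        have e'' : u * u = u^2 := by ring
        linarith
      have e2 : ε^2 * (X^3/4) < ε^2 * ((X*Y)^2/4) := by
        apply mul_lt_mul_of_pos_left _ (pow_pos hε0 2)
        linarith
      have e3 : 3/2 * X^2 < ε^2 * (X^3/4) := by
        have p := mul_lt_mul_of_pos_right hXe (pow_pos hX0 2)
        have e' : ε^2 * X * X^2 = ε^2 * X^3 := by ring
        have e'' : ε^2 * (X^3/4) = ε^2 * X^3 / 4 := by ring
        linarith
      have hvε : v < ε^2 * u^2 := by linarith
      have h9 : v^3 < ε^2 * u^2 * v^2 := by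
        calc v^3 = v * v^2 := by ring
          _ < (ε^2 * u^2) * v^2 := mul_lt_mul_of_pos_right hvε (pow_pos hv0 2)
      calc (1/ε)^2 * v^3 < (1/ε)^2 * (ε^2 * u^2 * v^2) := by
            apply mul_lt_mul_of_pos_left h9 (pow_pos (by positivity) 2)
        _ = (u * v)^2 := by field_simp
  · exact lt_of_le_of_lt (le_of_eq (by rw [hP])) hu1
  · exact lt_of_lt_of_le hu2 (le_of_eq (by rw [hP]))
  · exact hv1
  · exact hv2

/-- there exist `ε > 0` and `R₀ > 1/ε¹⁰` such that for all
`R > R₀`: `H(V⁻) ⊂ V⁻`, and for every `w = (x,y,z) ∈ V⁻`, writing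
`H(w) = (x₁,y₁,z₁)`, one has `|xy|/2 < |x₁| < 3|xy|/2` and
`(1 − |b|ε²)|x|² < |y₁| < (1 + |b|ε²)|x|²`. -/
theorem stmt7 (a b : ℂ) (ha : a ≠ 0) (hb : b ≠ 0) :
    ∃ ε > (0 : ℝ), ∃ R₀ > 1 / ε ^ 10, ∀ R > R₀,
      H a b '' Vminus a ε R ⊆ Vminus a ε R ∧
      ∀ w ∈ Vminus a ε R,
        ‖w.1 * w.2.1‖ / 2 < ‖(H a b w).1‖ ∧
        ‖(H a b w).1‖ < 3 * ‖w.1 * w.2.1‖ / 2 ∧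
        (1 - ‖b‖ * ε ^ 2) * (‖w.1‖) ^ 2 <
          ‖(H a b w).2.1‖ ∧
        ‖(H a b w).2.1‖ <
          (1 + ‖b‖ * ε ^ 2) * (‖w.1‖) ^ 2 := by
  set A := ‖a‖ with hAdef
  set B := ‖b‖ with hBdef
  have hA0 : 0 ≤ A := norm_nonneg a
  have hB0 : 0 ≤ B := norm_nonneg b
  set E : ℝ := 12 + 8*A + 2*B with hEdef
  have hE12 : 12 ≤ E := by linarith
  have hE0 : 0 < E := by linarith
  have hE1 : 1 ≤ E := by linarith
  have hinv : 1 / (E⁻¹)^10 = E^10 := by rw [one_div, ← inv_pow, inv_inv]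
  refine ⟨E⁻¹, inv_pos.mpr hE0, E^10 + 1, by rw [gt_iff_lt, hinv]; linarith, fun R hR => ?_⟩
  have hE10 : E ≤ E^10 := le_self_pow₀ hE1 (by norm_num)
  have hε0 : 0 < E⁻¹ := inv_pos.mpr hE0
  have hε12 : E⁻¹ ≤ 1/12 := by
    rw [one_div]
    exact inv_anti₀ (by norm_num) hE12
  have hbε : B * (E⁻¹)^2 ≤ 1/2 := by
    rw [inv_pow, ← div_eq_mul_inv, div_le_iff₀ (by positivity)]
    nlinarith
  have hRε : (1/E⁻¹)^10 < R := by
    rw [one_div, inv_inv]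
    linarith
  have hRa : 8 * A < R := by linarith
  refine ⟨?_, fun w hw => (core a b E⁻¹ R hε0 hε12 hb hbε (by rw [one_div] at hRε ⊢; exact hRε) hRa w hw).2⟩
  rintro _ ⟨w, hw, rfl⟩
  exact (core a b E⁻¹ R hε0 hε12 hb hbε (by rw [one_div] at hRε ⊢; exact hRε) hRa w hw).1
end

section
/- There exist ε > 0 and R₀ > 1/ε¹⁰ such that for all R > R₀ (so that H(V⁻) ⊂ V⁻): the sets U⁺ and K⁺ are completely invariant under H, i.e. H(U⁺) = U⁺ and H(K⁺) = K⁺. -/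
open Complex Filter Topology

private lemma rpow32 {t : ℝ} (ht : 0 ≤ t) : t ^ ((3:ℝ)/2) = t * Real.sqrt t := by
  rw [show (3:ℝ)/2 = 1 + 1/2 by norm_num, Real.rpow_add' ht (by norm_num),
    Real.rpow_one, ← Real.sqrt_eq_rpow]

private lemma hinv_h (a b : ℂ) (ha : a ≠ 0) (hb : b ≠ 0) (w : ℂ × ℂ × ℂ) :
    Hinv a b (H a b w) = w := by
  obtain ⟨x, y, z⟩ := w
  simp only [H, Hinv, Prod.mk.injEq]
  refine ⟨trivial, ?_, ?_⟩ <;> field_simp <;> ring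

private lemma h_hinv (a b : ℂ) (ha : a ≠ 0) (hb : b ≠ 0) (w : ℂ × ℂ × ℂ) :
    H a b (Hinv a b w) = w := by
  obtain ⟨x, y, z⟩ := w
  simp only [H, Hinv, Prod.mk.injEq]
  refine ⟨?_, ?_, trivial⟩ <;> field_simp <;> ring

set_option maxHeartbeats 1000000 in
private 
lemma key_lemma (a b : ℂ) (ε R : ℝ) (hε0 : 0 < ε) (hε1 : ε ≤ 1/4)
    (hεa : 8 * ‖a‖ * ε ≤ 1) (hεb : 2 * ‖b‖ * ε ≤ 1)
    (hR : 2/ε^10 ≤ R) : ∀ w ∈ Vminus a ε R, H a b w ∈ Vminus a ε R := by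
  rintro ⟨x, y, z⟩ hw
  simp only [Vminus, Set.mem_setOf_eq, H, norm_mul, gt_iff_lt] at hw ⊢
  set A := ‖a‖ with hA
  set Bb := ‖b‖ with hB
  set X := ‖x‖ with hX
  set Y := ‖y‖ with hY
  set Z := ‖z‖ with hZ
  clear_value A Bb X Y Z
  have hA0 : 0 ≤ A := by rw [hA]; exact norm_nonneg a
  have hB0 : 0 ≤ Bb := by rw [hB]; exact norm_nonneg b
  have hX0' : 0 ≤ X := by rw [hX]; exact norm_nonneg x
  have hY0' : 0 ≤ Y := by rw [hY]; exact norm_nonneg y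
  have hZ0 : 0 ≤ Z := by rw [hZ]; exact norm_nonneg z
  simp only [max_lt_iff] at hw
  obtain ⟨h1, h2, h3, h4⟩ := hw
  have hR0 : 0 < R := lt_of_lt_of_le (by positivity) hR
  have hX0 : 0 < X := by nlinarith
  have hY0 : 0 < Y := by nlinarith
  rw [rpow32 hX0'] at h3
  rw [rpow32 hY0'] at h4
  -- basic consequences
  have hsX : Real.sqrt X < Y := by nlinarith [Real.sqrt_nonneg X]
  have h4' : Y * Real.sqrt Y < X * Y * ε := by
    rw [one_div, inv_mul_eq_div, div_lt_iff₀ hε0] at h4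
    linarith
  have hsY : Real.sqrt Y < ε * X := by nlinarith [Real.sqrt_nonneg Y]
  have hYlt : Y < ε^2 * X^2 := by
    nlinarith [Real.sq_sqrt hY0', Real.sqrt_nonneg Y, mul_pos hε0 hX0]
  have hεR : 2 ≤ ε^10 * R := by
    rw [div_le_iff₀ (pow_pos hε0 10)] at hR; linarith [hR]
  have hεXY : 2 ≤ ε^10 * (X*Y) := by nlinarith [pow_pos hε0 10]
  have hc : 2 < ε^12 * X^3 := by
    nlinarith [mul_pos (mul_pos (pow_pos hε0 10) hX0) (sub_pos.2 hYlt)]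
  have hX4 : 1 < ε^4 * X := by
    by_contra hcon
    push_neg at hcon
    have h0 : (0:ℝ) ≤ ε^4 * X := by positivity
    have := pow_le_pow_left₀ h0 hcon 3
    nlinarith [hc]
  have hε4 : ε^4 ≤ (1/4:ℝ)^4 := pow_le_pow_left₀ hε0.le hε1 4
  have hX256 : 256 < X := by nlinarith [hX4, hε4, hX0]
  have hY2X : X < Y^2 := by
    nlinarith [hsX, Real.sqrt_nonneg X, Real.sq_sqrt hX0']
  have hY2 : 1 < ε^2 * Y := by
    nlinarith [mul_pos (pow_pos hε0 4) (sub_pos.2 hY2X),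
      mul_nonneg (sq_nonneg ε) hY0.le]
  -- new coordinates
  set X' := ‖x*y + a*z‖ with hX'
  set Y' := ‖x^2 + b*y‖ with hY'
  clear_value X' Y'
  have hX'0 : 0 ≤ X' := by rw [hX']; exact norm_nonneg _
  have hY'0 : 0 ≤ Y' := by rw [hY']; exact norm_nonneg _
  have htri1 : X * Y ≤ X' + A * Z := by
    have h := norm_add_le (x*y + a*z) (-(a*z))
    simpa [norm_mul, norm_neg, ← hA, ← hX, ← hY, ← hZ, ← hX'] using h
  have hX'lo : X * Y / 2 < X' := by linarith
  have hX'pos : 0 < X' := by nlinarith [mul_pos hX0 hY0]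
  have htri1' : X' ≤ X * Y + A * Z := by
    have h := norm_add_le (x*y) (a*z)
    simpa [norm_mul, norm_neg, ← hA, ← hX, ← hY, ← hZ, ← hX'] using h
  have hX'hi : X' < X*Y + X*Y/2 := by linarith
  have htri2 : X^2 ≤ Y' + Bb * Y := by
    have h := norm_add_le (x^2 + b*y) (-(b*y))
    simpa [norm_mul, norm_pow, norm_neg, ← hB, ← hX, ← hY, ← hY'] using h
  have hbY : Bb * Y ≤ X^2 / 2 := by
    have t1 : Bb * Y ≤ Bb * (ε^2*X^2) := mul_le_mul_of_nonneg_left hYlt.le hB0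
    nlinarith [mul_nonneg (mul_nonneg hε0.le hX0') hX0', sq_nonneg X,
      mul_nonneg hB0 (mul_nonneg hε0.le (sq_nonneg X))]
  have hY'lo : X^2/2 - X' * 0 ≤ Y' := by linarith
  have hY'lo' : X^2/2 ≤ Y' := by linarith
  have hY'pos : 0 < Y' := by nlinarith [sq_nonneg X]
  have htri3 : Y' ≤ X^2 + Bb * Y := by
    have h := norm_add_le (x^2) (b*y)
    simpa [norm_mul, norm_pow, norm_neg, ← hB, ← hX, ← hY, ← hY'] using h
  have hY'hi : Y' ≤ X^2 + X^2/2 := by linarith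
  -- goal
  clear h2 h3 h4 h4' hsX hsY htri1 htri1' htri2 htri3 hbY hc hεR hεXY hε4 hY2X hεb hR hR0 hZ0 hZ hY'lo
  rw [rpow32 hX'0, rpow32 hY'0]
  refine max_lt ?_ (max_lt ?_ (max_lt ?_ ?_))
  · -- R < X' * Y'
    have hY'2 : 2 ≤ Y' := by
      have t := mul_lt_mul_of_pos_right hX256 hX0
      linarith [t, hY'lo', hX256]
    have h2Y : X' * 2 ≤ X' * Y' := mul_le_mul_of_nonneg_left hY'2 hX'0
    linarith [h2Y, hX'lo, h1]
  · -- 2 * (A * X) < X' * Y'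
    have hmono : ε^10 * (X^2*Y) ≤ ε * (X^2*Y) := by
      have hε10 : ε^10 ≤ ε := by
        calc ε^10 ≤ ε^1 := pow_le_pow_of_le_one hε0.le (by linarith) (by norm_num)
        _ = ε := pow_one ε
      exact mul_le_mul_of_nonneg_right hε10 (by positivity)
    have e3 : 1 < (ε^4*X)*(ε^4*X) := by
      have t := sq_nonneg (ε^4*X - 1)
      linarith [t, hX4]
    have e4 : 1 < ((ε^4*X)*(ε^4*X))*(ε^2*Y) := by
      have t := mul_pos (sub_pos.2 e3) (sub_pos.2 hY2)
      linarith [t, e3, hY2]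
    have h8 : ε * (8*A) < ε * (X^2*Y) := by linarith [e4, hmono, hεa]
    have hXY8 : 8*A < X^2*Y := lt_of_mul_lt_mul_left h8 hε0.le
    have t1 : 0 < (X' - X*Y/2) * Y' := mul_pos (sub_pos.2 hX'lo) hY'pos
    have t2 : 0 ≤ (Y' - X^2/2) * (X*Y/2) :=
      mul_nonneg (sub_nonneg.2 hY'lo') (by positivity)
    have t3 : 0 < (X^2*Y - 8*A) * X := mul_pos (sub_pos.2 hXY8) hX0
    linarith [t1, t2, t3]
  · -- X' * sqrt X' < X' * Y'
    have hXYe : X*Y < ε^2*X^3 := by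
      have t : 0 < (ε^2*X^2 - Y) * X := mul_pos (sub_pos.2 hYlt) hX0
      linarith [t]
    have hε2 : ε^2 ≤ 1/16 := by
      have h := pow_le_pow_left₀ hε0.le hε1 2
      norm_num at h; linarith
    have hkey : X' < Y'^2 := by
      have h6 : (0:ℝ) < X - 6*ε^2 := by linarith [hε2, hX256]
      have t : 0 < (X - 6*ε^2) * X^3 := mul_pos h6 (pow_pos hX0 3)
      have s : X^2/2 * (X^2/2) ≤ Y' * Y' :=
        mul_le_mul hY'lo' hY'lo' (by positivity) hY'0
      linarith [hX'hi, hXYe, t, s]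
    have hs : Real.sqrt X' < Y' := (Real.sqrt_lt' hY'pos).2 hkey
    have := mul_lt_mul_of_pos_left hs hX'pos
    linarith [this]
  · -- (1/ε) * (Y' * sqrt Y') < X' * Y'
    have hεY : 4 < ε * Y := by
      by_contra hcon
      push_neg at hcon
      have h := mul_le_mul_of_nonneg_left hcon hε0.le
      linarith [h, hY2, hε1, hε0]
    have hε2Y2 : 16 < ε^2*Y^2 := by
      have t := mul_lt_mul'' hεY hεY (by norm_num) (by norm_num)
      linarith [t]
    have t1 : X*Y/2 * (X*Y/2) < X'*X' :=
      mul_lt_mul'' hX'lo hX'lo (by positivity) (by positivity)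
    have t2 : ε^2 * (X*Y/2*(X*Y/2)) < ε^2 * (X'*X') :=
      mul_lt_mul_of_pos_left t1 (pow_pos hε0 2)
    have t3 : 16*X^2 ≤ ε^2*Y^2*X^2 :=
      mul_le_mul_of_nonneg_right hε2Y2.le (sq_nonneg X)
    have hXsq : (0:ℝ) < X^2 := pow_pos hX0 2
    have hY'lt : Y' < (ε*X')^2 := by linarith [hY'hi, t2, t3, hXsq]
    have hsY' := (Real.sqrt_lt' (mul_pos hε0 hX'pos)).2 hY'lt
    have hg4 : Y' * Real.sqrt Y' < X' * Y' * ε := by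
      have h := mul_lt_mul_of_pos_left hsY' hY'pos
      linarith [h]
    rw [one_div, inv_mul_eq_div, div_lt_iff₀ hε0]
    linarith

private lemma mem_Uplus_iff (a b : ℂ) (ε R : ℝ) (w : ℂ × ℂ × ℂ) :
    w ∈ Uplus a b ε R ↔ ∃ n : ℕ, (H a b)^[n] w ∈ Vminus a ε R := by
  simp [Uplus, Set.mem_iUnion, Set.mem_preimage]

/-- there exist `ε > 0` and `R₀ > 1/ε¹⁰` such that for all
`R > R₀`: `U⁺` and `K⁺` are completely invariant under `H`, i.e.
`H(U⁺) = U⁺` and `H(K⁺) = K⁺`. -/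
theorem stmt9 (a b : ℂ) (ha : a ≠ 0) (hb : b ≠ 0) :
    ∃ ε > (0 : ℝ), ∃ R₀ > 1 / ε ^ 10, ∀ R > R₀,
      H a b '' Uplus a b ε R = Uplus a b ε R ∧
      H a b '' Kplus a b ε R = Kplus a b ε R := by
  classical
  set A := ‖a‖ with hA
  set B := ‖b‖ with hB
  have hpos : (0:ℝ) < 8 * (A + B + 1) := by positivity
  set ε := min (1/4 : ℝ) (1/(8*(A+B+1))) with hεdef
  have hε0 : 0 < ε := lt_min (by norm_num) (by positivity)
  have hε1 : ε ≤ 1/4 := min_le_left _ _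
  have key1 : 8*(A+B+1)*ε ≤ 1 := by
    have h2 : ε ≤ 1/(8*(A+B+1)) := min_le_right _ _
    have := mul_le_mul_of_nonneg_left h2 hpos.le
    rwa [mul_one_div, div_self hpos.ne'] at this
  have hA0 : 0 ≤ A := norm_nonneg a
  have hB0 : 0 ≤ B := norm_nonneg b
  have hεa : 8 * ‖a‖ * ε ≤ 1 := by
    rw [← hA]
    have h8 : 8*A ≤ 8*(A+B+1) := by linarith
    have := mul_le_mul_of_nonneg_right h8 hε0.le
    linarith [key1, this]
  have hεb : 2 * ‖b‖ * ε ≤ 1 := by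
    rw [← hB]
    have h8 : 2*B ≤ 8*(A+B+1) := by linarith
    have := mul_le_mul_of_nonneg_right h8 hε0.le
    linarith [key1, this]
  refine ⟨ε, hε0, 2/ε^10, ?_, ?_⟩
  · rw [gt_iff_lt, div_lt_div_iff₀ (pow_pos hε0 10) (pow_pos hε0 10)]
    have h10 : (0:ℝ) < ε^10 := pow_pos hε0 10
    linarith
  · intro R hR
    have hkey : ∀ w ∈ Vminus a ε R, H a b w ∈ Vminus a ε R :=
      key_lemma a b ε R hε0 hε1 hεa hεb hR.le
    have hbij : Function.Bijective (H a b) :=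
      Function.bijective_iff_has_inverse.mpr
        ⟨Hinv a b, hinv_h a b ha hb, h_hinv a b ha hb⟩
    have hU : H a b '' Uplus a b ε R = Uplus a b ε R := by
      apply Set.Subset.antisymm
      · rintro _ ⟨u, hu, rfl⟩
        rw [mem_Uplus_iff] at hu ⊢
        obtain ⟨n, hn⟩ := hu
        refine ⟨n, ?_⟩
        rw [← Function.iterate_succ_apply, Function.iterate_succ_apply']
        exact hkey _ hn
      · intro u hu
        rw [mem_Uplus_iff] at hu
        obtain ⟨n, hn⟩ := hu
        refine ⟨Hinv a b u, ?_, h_hinv a b ha hb u⟩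
        rw [mem_Uplus_iff]
        refine ⟨n + 1, ?_⟩
        rw [Function.iterate_succ_apply, h_hinv a b ha hb u]
        exact hn
    refine ⟨hU, ?_⟩
    rw [Kplus, Set.image_compl_eq hbij, hU]
end

section
/- Suppose b⁴ = 1, c ∈ ℂ satisfies c² = −b, and x ∈ ℂ with |x| ≥ 2. Writing Hⁿ(x,c) = (xₙ,yₙ), one has |y_{2n}| = 1 and (|x|/2)^{3ⁿ} ≤ |x_{2n}| ≤ (2|x|)^{3ⁿ} for all n ≥ 0. In particular the orbit of (x,c) escapes to infinity at exactly the super-exponential rate (const)^{(√3)ⁿ}. -/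
open Complex Filter Topology

/-- The two-dimensional model map `H(x,y) = (xy, x² + by)` on `ℂ²`. -/
noncomputable def H2 (b : ℂ) (p : ℂ × ℂ) : ℂ × ℂ :=
  (p.1 * p.2, p.1 ^ 2 + b * p.2)

private lemma sq_eq_one_aux18 : ∀ r : ℝ, 0 ≤ r → r ^ 2 = 1 → r = 1 := by
  intro r hr h
  have hfac : (r - 1) * (r + 1) = 0 := by linear_combination h
  rcases mul_eq_zero.mp hfac with h1 | h1
  · linarith
  · linarith

private lemma abs_d_aux18 (b : ℂ) (hbabs : ‖b‖ = 1) :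
    ∀ d : ℂ, d ^ 2 = -b → ‖d‖ = 1 := by
  intro d hd
  have h : ‖d‖ ^ 2 = 1 := by
    rw [← norm_pow, hd, norm_neg, hbabs]
  exact sq_eq_one_aux18 _ (norm_nonneg d) h

private lemma abs_b_aux18 (b : ℂ) (hb4 : b ^ 4 = 1) : ‖b‖ = 1 := by
  have h : ‖b‖ ^ 4 = 1 := by rw [← norm_pow, hb4, norm_one]
  have h2 : (‖b‖ ^ 2) ^ 2 = 1 := by rw [← pow_mul]; exact h
  have h3 : ‖b‖ ^ 2 = 1 := sq_eq_one_aux18 _ (sq_nonneg _) h2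
  exact sq_eq_one_aux18 _ (norm_nonneg b) h3

/-- One double-step of the iteration, algebraically, assuming `d² = -b`. -/
private lemma step_aux18 (b : ℂ) (hb4 : b ^ 4 = 1) (p : ℂ × ℂ) (hd : p.2 ^ 2 = -b) :
    ((H2 b) ((H2 b) p)).1 = p.1 * (p.1 ^ 2 * p.2 - b ^ 2) ∧
    ((H2 b) ((H2 b) p)).2 = b ^ 2 * p.2 := by
  constructor
  · simp only [H2]
    linear_combination b * p.1 * hd
  · simp only [H2]
    linear_combination p.1 ^ 2 * hd

/-- The arithmetic of the inductive step. -/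
private lemma arith_aux18 (A m M T : ℝ) (hA0 : 0 ≤ A) (hm1 : 1 ≤ m) (hM4 : 4 ≤ M)
    (hlo : 2 * m ≤ A) (hhi : A ≤ M / 2)
    (htlo : A ^ 2 - 1 ≤ T) (htup : T ≤ A ^ 2 + 1) :
    2 * m ^ 3 ≤ A * T ∧ A * T ≤ M ^ 3 / 2 := by
  have hA2 : (2:ℝ) ≤ A := by linarith
  have hm0 : (0:ℝ) ≤ m ^ 3 := by positivity
  have hA2sq : (4:ℝ) ≤ A ^ 2 := by nlinarith
  constructor
  · have t2 : A * (A ^ 2 - 1) ≤ A * T := mul_le_mul_of_nonneg_left htlo hA0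
    have hkey : (0:ℝ) ≤ (A ^ 2 - 4) * A := mul_nonneg (by linarith) hA0
    have t3 : (3/4 : ℝ) * A ^ 3 ≤ A * (A ^ 2 - 1) := by nlinarith [hkey]
    have t4 : (2 * m) ^ 3 ≤ A ^ 3 := pow_le_pow_left₀ (by positivity) hlo 3
    nlinarith [t2, t3, t4, hm0]
  · have h1 : A * T ≤ A * (A ^ 2 + 1) := mul_le_mul_of_nonneg_left htup hA0
    have u2 : A ^ 2 ≤ (M / 2) ^ 2 := pow_le_pow_left₀ hA0 hhi 2
    have u3 : A * (A ^ 2 + 1) ≤ (M / 2) * ((M / 2) ^ 2 + 1) :=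
      mul_le_mul hhi (by linarith) (by positivity) (by linarith)
    have hM2 : (16:ℝ) ≤ M ^ 2 := by nlinarith
    have hMcube : (0:ℝ) ≤ (M ^ 2 - 16) * M := mul_nonneg (by linarith) (by linarith)
    have u4 : (M / 2) * ((M / 2) ^ 2 + 1) = M ^ 3 / 8 + M / 2 := by ring
    have u5 : 16 * M ≤ M ^ 3 := by nlinarith [hMcube]
    rw [u4] at u3
    linarith [h1, u3, u5, hM4]

set_option maxHeartbeats 1000000 in
private lemma key_aux18 (b : ℂ) (hb4 : b ^ 4 = 1) (c : ℂ)
    (hc : c ^ 2 = -b) (x : ℂ) (hx : 2 ≤ ‖x‖) :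
    ∀ n : ℕ,
      (((H2 b)^[2 * n] (x, c)).2) ^ 2 = -b ∧
      2 * (‖x‖ / 2) ^ (3 ^ n) ≤ ‖((H2 b)^[2 * n] (x, c)).1‖ ∧
      ‖((H2 b)^[2 * n] (x, c)).1‖ ≤ (2 * ‖x‖) ^ (3 ^ n) / 2 := by
  have hbabs : ‖b‖ = 1 := abs_b_aux18 b hb4
  set L : ℝ := ‖x‖ / 2 with hL
  set U : ℝ := 2 * ‖x‖ with hU
  have hL1 : 1 ≤ L := by rw [hL]; linarith
  have hU4 : 4 ≤ U := by rw [hU]; linarith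
  intro n
  induction n with
  | zero =>
    simp only [Nat.mul_zero, Function.iterate_zero, id_eq, pow_zero, pow_one]
    refine ⟨hc, by rw [hL]; linarith, by rw [hU]; linarith⟩
  | succ n ih =>
    obtain ⟨hd, hlo, hhi⟩ := ih
    set p := (H2 b)^[2 * n] (x, c) with hp
    have hstep : (H2 b)^[2 * (n + 1)] (x, c) = (H2 b) ((H2 b) p) := by
      have h2 : 2 * (n + 1) = 2 + 2 * n := by ring
      rw [h2, Function.iterate_add_apply]
      simp [Function.iterate_succ, Function.comp]
      rfl
    obtain ⟨hfst, hsnd⟩ := step_aux18 b hb4 p hd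
    have hd' : (((H2 b)^[2 * (n + 1)] (x, c)).2) ^ 2 = -b := by
      rw [hstep, hsnd]
      have h3 : (b ^ 2 * p.2) ^ 2 = b ^ 4 * p.2 ^ 2 := by ring
      rw [h3, hb4, hd, one_mul]
    have hdabs : ‖p.2‖ = 1 := abs_d_aux18 b hbabs _ hd
    set A : ℝ := ‖p.1‖ with hA
    have hA0 : (0:ℝ) ≤ A := norm_nonneg _
    have hm1 : (1:ℝ) ≤ L ^ 3 ^ n := one_le_pow₀ hL1
    have hM4 : (4:ℝ) ≤ U ^ 3 ^ n := by
      calc (4:ℝ) = 4 ^ 1 := (pow_one 4).symm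
      _ ≤ 4 ^ 3 ^ n := pow_le_pow_right₀ (by norm_num) (Nat.one_le_pow _ _ (by norm_num))
      _ ≤ U ^ 3 ^ n := pow_le_pow_left₀ (by norm_num) hU4 _
    have habs2 : ‖p.1 ^ 2 * p.2‖ = A ^ 2 := by
      rw [norm_mul, norm_pow, hdabs, mul_one]
    have habsb2 : ‖b ^ 2‖ = 1 := by rw [norm_pow, hbabs, one_pow]
    have htri_up : ‖p.1 ^ 2 * p.2 - b ^ 2‖ ≤ A ^ 2 + 1 := by
      calc ‖p.1 ^ 2 * p.2 - b ^ 2‖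
          = ‖p.1 ^ 2 * p.2 + -(b ^ 2)‖ := by ring_nf
        _ ≤ ‖p.1 ^ 2 * p.2‖ + ‖-(b ^ 2)‖ :=
            norm_add_le _ _
        _ = A ^ 2 + 1 := by rw [habs2, norm_neg, habsb2]
    have htri_lo : A ^ 2 - 1 ≤ ‖p.1 ^ 2 * p.2 - b ^ 2‖ := by
      have h2 : ‖p.1 ^ 2 * p.2‖ ≤
          ‖p.1 ^ 2 * p.2 - b ^ 2‖ + ‖b ^ 2‖ := by
        calc ‖p.1 ^ 2 * p.2‖
            = ‖(p.1 ^ 2 * p.2 - b ^ 2) + b ^ 2‖ := by ring_nf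
          _ ≤ _ := norm_add_le _ _
      rw [habs2, habsb2] at h2
      linarith
    have hAfst : ‖((H2 b)^[2 * (n + 1)] (x, c)).1‖
        = A * ‖p.1 ^ 2 * p.2 - b ^ 2‖ := by
      rw [hstep, hfst, norm_mul]
    have hpow : ∀ r : ℝ, r ^ 3 ^ (n + 1) = (r ^ 3 ^ n) ^ 3 := by
      intro r
      rw [pow_succ, pow_mul]
    obtain ⟨hb1, hb2⟩ := arith_aux18 A (L ^ 3 ^ n) (U ^ 3 ^ n)
      (‖p.1 ^ 2 * p.2 - b ^ 2‖) hA0 hm1 hM4 hlo hhi htri_lo htri_up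
    exact ⟨hd', by rw [hAfst, hpow]; exact hb1, by rw [hAfst, hpow]; exact hb2⟩

/-- if `b⁴ = 1`, `c² = −b` and `|x| ≥ 2`, then writing
`Hⁿ(x,c) = (xₙ,yₙ)`, one has `|y_{2n}| = 1` and
`(|x|/2)^{3ⁿ} ≤ |x_{2n}| ≤ (2|x|)^{3ⁿ}` for all `n ≥ 0`; so the orbit of
`(x, c)` escapes to infinity at exactly the rate `(const)^{(√3)ⁿ}`. -/
theorem stmt18 (b : ℂ) (hb : b ≠ 0) (hb4 : b ^ 4 = 1) (c : ℂ)
    (hc : c ^ 2 = -b) (x : ℂ) (hx : 2 ≤ ‖x‖) :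
    ∀ n : ℕ,
      ‖((H2 b)^[2 * n] (x, c)).2‖ = 1 ∧
      (‖x‖ / 2) ^ (3 ^ n) ≤ ‖((H2 b)^[2 * n] (x, c)).1‖ ∧
      ‖((H2 b)^[2 * n] (x, c)).1‖ ≤ (2 * ‖x‖) ^ (3 ^ n) := by
  intro n
  obtain ⟨hd, hlo, hhi⟩ := key_aux18 b hb4 c hc x hx n
  have hm1 : (1:ℝ) ≤ (‖x‖ / 2) ^ 3 ^ n := one_le_pow₀ (by linarith)
  refine ⟨abs_d_aux18 b (abs_b_aux18 b hb4) _ hd, by linarith, ?_⟩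
  have h0 : (0:ℝ) ≤ (2 * ‖x‖) ^ 3 ^ n := pow_nonneg (by linarith) _
  linarith
end
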